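/- Optimality of independent inputs for compound memoryless channels: in the compound memoryless channel setting, let σ²_{n,s} be the variance of the information density rate Z̃_{n,s} under the independent-symbols input p̃_n, and assume lim_{n→∞} sup_{s∈S} σ²_{n,s} = 0. Then, assuming the compound quantities are finite, cinf I(X;Y) ≤ cinf I(X̃;Ỹ), and moreover cinf I(X̃;Ỹ) = liminf_{n→∞} inf_{s∈S} (1/n)·Σ_{k=1}^n I(X̃_k;Ỹ_k|s), where I(X̃_k;Ỹ_k|s) is the mutual information of the k-th symbol pair under state s. -/

import Mathlib

set_option linter.unusedSectionVars false
set_option linter.unusedVariables false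
set_option maxHeartbeats 1000000
open Filter
open scoped ENNReal

noncomputable section

variable {S 𝒳 𝒴 : Type*} [Fintype 𝒳] [Fintype 𝒴]

/-- Blocklength-`n` memoryless channel weight `W_{n,s}(x)(y) = Π_k w_{k,s}(x_k)(y_k)`. -/
def Wblock (w : ℕ → S → 𝒳 → PMF 𝒴) (n : ℕ) (s : S) (x : Fin n → 𝒳) (y : Fin n → 𝒴) :
    ℝ≥0∞ :=
  ∏ k : Fin n, w k s (x k) (y k)

/-- The `k`-th one-dimensional marginal of the input distribution `p_n`. -/
def marg (p : ∀ n : ℕ, PMF (Fin n → 𝒳)) (n : ℕ) (k : Fin n) (u : 𝒳) : ℝ≥0∞ :=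
  ∑ x : Fin n → 𝒳, {x' : Fin n → 𝒳 | x' k = u}.indicator (fun x' => p n x') x

/-- The independent-symbols input `p̃_n(x) = Π_k p_{n,k}(x_k)` (product of marginals). -/
def ptilde (p : ∀ n : ℕ, PMF (Fin n → 𝒳)) (n : ℕ) (x : Fin n → 𝒳) : ℝ≥0∞ :=
  ∏ k : Fin n, marg p n k (x k)

/-- Output distribution induced by input weights `pw` through the block channel. -/
def outDistW (w : ℕ → S → 𝒳 → PMF 𝒴) (pw : ∀ n : ℕ, (Fin n → 𝒳) → ℝ≥0∞)
    (n : ℕ) (s : S) (y : Fin n → 𝒴) : ℝ≥0∞ :=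
  ∑ x : Fin n → 𝒳, pw n x * Wblock w n s x y

/-- Information density rate with input weights `pw`. -/
def densRate (w : ℕ → S → 𝒳 → PMF 𝒴) (pw : ∀ n : ℕ, (Fin n → 𝒳) → ℝ≥0∞)
    (n : ℕ) (s : S) (z : (Fin n → 𝒳) × (Fin n → 𝒴)) : ℝ :=
  (1 / (n : ℝ)) * Real.log ((Wblock w n s z.1 z.2).toReal /
    (outDistW w pw n s z.2).toReal)

/-- Probability of an event under the joint law given by input weights `pw` and the
block channel. -/
def probEventW (w : ℕ → S → 𝒳 → PMF 𝒴) (pw : ∀ n : ℕ, (Fin n → 𝒳) → ℝ≥0∞)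
    (n : ℕ) (s : S) (E : Set ((Fin n → 𝒳) × (Fin n → 𝒴))) : ℝ≥0∞ :=
  ∑ z : (Fin n → 𝒳) × (Fin n → 𝒴),
    E.indicator (fun z' => pw n z'.1 * Wblock w n s z'.1 z'.2) z

/-- The set whose supremum is the compound inf-information rate for input weights `pw`. -/
def cinfISetW (w : ℕ → S → 𝒳 → PMF 𝒴) (pw : ∀ n : ℕ, (Fin n → 𝒳) → ℝ≥0∞) : Set ℝ :=
  {R : ℝ | Tendsto (fun n => ⨆ s : S,
      probEventW w pw n s {z | densRate w pw n s z ≤ R}) atTop (nhds 0)}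

/-- The compound inf-information rate for input weights `pw`. -/
def cinfIW (w : ℕ → S → 𝒳 → PMF 𝒴) (pw : ∀ n : ℕ, (Fin n → 𝒳) → ℝ≥0∞) : ℝ :=
  sSup (cinfISetW w pw)

/-- Expectation under the joint law given by input weights `pw`. -/
def expW (w : ℕ → S → 𝒳 → PMF 𝒴) (pw : ∀ n : ℕ, (Fin n → 𝒳) → ℝ≥0∞)
    (n : ℕ) (s : S) (f : (Fin n → 𝒳) × (Fin n → 𝒴) → ℝ) : ℝ :=
  ∑ z : (Fin n → 𝒳) × (Fin n → 𝒴), (pw n z.1 * Wblock w n s z.1 z.2).toReal * f z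

/-- Variance of the information density rate under the independent-symbols input `p̃`. -/
def varTilde (w : ℕ → S → 𝒳 → PMF 𝒴) (p : ∀ n : ℕ, PMF (Fin n → 𝒳))
    (n : ℕ) (s : S) : ℝ :=
  expW w (fun m => ptilde p m) n s (fun z =>
    (densRate w (fun m => ptilde p m) n s z -
      expW w (fun m => ptilde p m) n s (densRate w (fun m => ptilde p m) n s)) ^ 2)

/-- Output distribution of the `k`-th symbol under the marginal input `p_{n,k}`. -/
def qsym (w : ℕ → S → 𝒳 → PMF 𝒴) (p : ∀ n : ℕ, PMF (Fin n → 𝒳))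
    (n : ℕ) (k : Fin n) (s : S) (v : 𝒴) : ℝ≥0∞ :=
  ∑ u : 𝒳, marg p n k u * w k s u v

/-- The `k`-th symbol mutual information `I(X̃_k;Ỹ_k|s)`. -/
def Isym (w : ℕ → S → 𝒳 → PMF 𝒴) (p : ∀ n : ℕ, PMF (Fin n → 𝒳))
    (n : ℕ) (k : Fin n) (s : S) : ℝ :=
  ∑ u : 𝒳, ∑ v : 𝒴, (marg p n k u * w k s u v).toReal *
    Real.log ((w k s u v).toReal / (qsym w p n k s v).toReal)

/-! ### Auxiliary lemmas -/

section Basic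

lemma sum_pmf_eq_one {α : Type*} [Fintype α] (q : PMF α) : ∑ a : α, q a = 1 := by
  rw [← tsum_fintype (L := SummationFilter.unconditional _)]; exact q.tsum_coe

lemma pmf_le_one {α : Type*} (q : PMF α) (a : α) : q a ≤ 1 := q.coe_le_one a

lemma pmf_ne_top {α : Type*} (q : PMF α) (a : α) : q a ≠ ⊤ :=
  ne_top_of_le_ne_top ENNReal.one_ne_top (q.coe_le_one a)

variable (w : ℕ → S → 𝒳 → PMF 𝒴) (p : ∀ n : ℕ, PMF (Fin n → 𝒳))

lemma marg_le_one (n : ℕ) (k : Fin n) (u : 𝒳) : marg p n k u ≤ 1 := by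
  calc marg p n k u ≤ ∑ x : Fin n → 𝒳, p n x :=
        Finset.sum_le_sum fun x _ => Set.indicator_le_self _ _ x
    _ = 1 := sum_pmf_eq_one _

lemma marg_ne_top (n : ℕ) (k : Fin n) (u : 𝒳) : marg p n k u ≠ ⊤ :=
  ne_top_of_le_ne_top ENNReal.one_ne_top (marg_le_one p n k u)

lemma sum_marg (n : ℕ) (k : Fin n) : ∑ u : 𝒳, marg p n k u = 1 := by
  classical
  unfold marg
  rw [Finset.sum_comm]
  have h : ∀ x : Fin n → 𝒳,
      ∑ u : 𝒳, {x' : Fin n → 𝒳 | x' k = u}.indicator (fun x' => p n x') x = p n x := by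
    intro x
    have h2 : ∀ u : 𝒳, {x' : Fin n → 𝒳 | x' k = u}.indicator (fun x' => p n x') x
        = if x k = u then p n x else 0 := by
      intro u
      by_cases h : x k = u
      · rw [Set.indicator_of_mem (show x ∈ {x' : Fin n → 𝒳 | x' k = u} from h), if_pos h]
      · rw [Set.indicator_of_notMem (show x ∉ {x' : Fin n → 𝒳 | x' k = u} from h), if_neg h]
    simp only [h2]
    rw [Finset.sum_ite_eq]
    simp
  simp only [h]
  exact sum_pmf_eq_one _

lemma le_marg (n : ℕ) (k : Fin n) (x : Fin n → 𝒳) : p n x ≤ marg p n k (x k) := by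
  have hx : x ∈ {x'' : Fin n → 𝒳 | x'' k = x k} := rfl
  calc p n x = {x'' : Fin n → 𝒳 | x'' k = x k}.indicator (fun x'' => p n x'') x :=
        (Set.indicator_of_mem hx _).symm
    _ ≤ ∑ x' : Fin n → 𝒳, {x'' : Fin n → 𝒳 | x'' k = x k}.indicator (fun x'' => p n x'') x' :=
        Finset.single_le_sum (fun _ _ => zero_le) (Finset.mem_univ x)
    _ = marg p n k (x k) := rfl

lemma marg_ne_zero (n : ℕ) (k : Fin n) (x : Fin n → 𝒳) (hx : p n x ≠ 0) :
    marg p n k (x k) ≠ 0 :=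
  fun h => hx (le_antisymm (h ▸ le_marg p n k x) (zero_le))

lemma qsym_le_one (n : ℕ) (k : Fin n) (s : S) (v : 𝒴) : qsym w p n k s v ≤ 1 := by
  calc qsym w p n k s v ≤ ∑ u : 𝒳, marg p n k u * 1 :=
        Finset.sum_le_sum fun u _ => mul_le_mul_right (pmf_le_one _ _) _
    _ = 1 := by simp [sum_marg]

lemma qsym_ne_top (n : ℕ) (k : Fin n) (s : S) (v : 𝒴) : qsym w p n k s v ≠ ⊤ :=
  ne_top_of_le_ne_top ENNReal.one_ne_top (qsym_le_one w p n k s v)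

lemma le_qsym (n : ℕ) (k : Fin n) (s : S) (u : 𝒳) (v : 𝒴) :
    marg p n k u * w k s u v ≤ qsym w p n k s v :=
  Finset.single_le_sum (f := fun u' => marg p n k u' * w k s u' v)
    (fun _ _ => zero_le) (Finset.mem_univ u)

lemma sum_qsym (n : ℕ) (k : Fin n) (s : S) : ∑ v : 𝒴, qsym w p n k s v = 1 := by
  unfold qsym
  rw [Finset.sum_comm]
  have : ∀ u : 𝒳, ∑ v : 𝒴, marg p n k u * w k s u v = marg p n k u := by
    intro u; rw [← Finset.mul_sum, sum_pmf_eq_one, mul_one]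
  simp only [this, sum_marg]

lemma Wblock_le_one (n : ℕ) (s : S) (x : Fin n → 𝒳) (y : Fin n → 𝒴) :
    Wblock w n s x y ≤ 1 :=
  Finset.prod_le_one (fun _ _ => zero_le) (fun k _ => pmf_le_one _ _)

lemma Wblock_ne_top (n : ℕ) (s : S) (x : Fin n → 𝒳) (y : Fin n → 𝒴) :
    Wblock w n s x y ≠ ⊤ :=
  ne_top_of_le_ne_top ENNReal.one_ne_top (Wblock_le_one w n s x y)

lemma ptilde_le_one (n : ℕ) (x : Fin n → 𝒳) : ptilde p n x ≤ 1 :=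
  Finset.prod_le_one (fun _ _ => zero_le) (fun k _ => marg_le_one p n k _)

lemma ptilde_ne_top (n : ℕ) (x : Fin n → 𝒳) : ptilde p n x ≠ ⊤ :=
  ne_top_of_le_ne_top ENNReal.one_ne_top (ptilde_le_one p n x)

lemma sum_Wblock (n : ℕ) (s : S) (x : Fin n → 𝒳) :
    ∑ y : Fin n → 𝒴, Wblock w n s x y = 1 := by
  unfold Wblock
  rw [← Fintype.piFinset_univ,
    ← Finset.prod_univ_sum (fun _ : Fin n => (Finset.univ : Finset 𝒴))
      (fun k v => w k s (x k) v)]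
  simp [sum_pmf_eq_one]

lemma sum_ptilde (n : ℕ) : ∑ x : Fin n → 𝒳, ptilde p n x = 1 := by
  unfold ptilde
  rw [← Fintype.piFinset_univ,
    ← Finset.prod_univ_sum (fun _ : Fin n => (Finset.univ : Finset 𝒳))
      (fun k u => marg p n k u)]
  simp [sum_marg]

lemma outDist_tilde_eq (n : ℕ) (s : S) (y : Fin n → 𝒴) :
    outDistW w (fun m => ptilde p m) n s y = ∏ k : Fin n, qsym w p n k s (y k) := by
  have h1 : ∀ x : Fin n → 𝒳, ptilde p n x * Wblock w n s x y
      = ∏ k : Fin n, (marg p n k (x k) * w k s (x k) (y k)) := by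
    intro x; rw [ptilde, Wblock, ← Finset.prod_mul_distrib]
  unfold outDistW
  simp only [h1, qsym]
  rw [← Fintype.piFinset_univ,
    ← Finset.prod_univ_sum (fun _ : Fin n => (Finset.univ : Finset 𝒳))
      (fun k u => marg p n k u * w k s u (y k))]

lemma outDist_le_one (pw : ∀ n : ℕ, (Fin n → 𝒳) → ℝ≥0∞)
    (hpw : ∀ n, ∑ x : Fin n → 𝒳, pw n x = 1) (n : ℕ) (s : S) (y : Fin n → 𝒴) :
    outDistW w pw n s y ≤ 1 := by
  calc outDistW w pw n s y ≤ ∑ x : Fin n → 𝒳, pw n x * 1 :=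
        Finset.sum_le_sum fun x _ => mul_le_mul_right (Wblock_le_one w n s x y) _
    _ = 1 := by simp [hpw]

lemma sum_outDist (pw : ∀ n : ℕ, (Fin n → 𝒳) → ℝ≥0∞)
    (hpw : ∀ n, ∑ x : Fin n → 𝒳, pw n x = 1) (n : ℕ) (s : S) :
    ∑ y : Fin n → 𝒴, outDistW w pw n s y = 1 := by
  unfold outDistW
  rw [Finset.sum_comm]
  have : ∀ x : Fin n → 𝒳, ∑ y : Fin n → 𝒴, pw n x * Wblock w n s x y = pw n x := by
    intro x; rw [← Finset.mul_sum, sum_Wblock, mul_one]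
  simp only [this, hpw]

lemma le_outDist (pw : ∀ n : ℕ, (Fin n → 𝒳) → ℝ≥0∞) (n : ℕ) (s : S)
    (x : Fin n → 𝒳) (y : Fin n → 𝒴) :
    pw n x * Wblock w n s x y ≤ outDistW w pw n s y :=
  Finset.single_le_sum (f := fun x' => pw n x' * Wblock w n s x' y)
    (fun _ _ => zero_le) (Finset.mem_univ x)

end Basic

section RealHelpers

/-- Gibbs pointwise inequality: `a - b ≤ a (log a - log b)` for nonneg `a, b`
with `b ≠ 0` whenever `a ≠ 0`. -/
lemma gibbs_pt {a b : ℝ} (ha : 0 ≤ a) (hb : 0 ≤ b) (h : a ≠ 0 → b ≠ 0) :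
    a - b ≤ a * (Real.log a - Real.log b) := by
  rcases eq_or_lt_of_le ha with h0 | hapos
  · simp [← h0]; linarith
  · have hbpos : 0 < b := lt_of_le_of_ne hb (Ne.symm (h (ne_of_gt hapos)))
    have hlog : Real.log (b / a) ≤ b / a - 1 := Real.log_le_sub_one_of_pos (by positivity)
    rw [Real.log_div (ne_of_gt hbpos) (ne_of_gt hapos)] at hlog
    have := mul_le_mul_of_nonneg_left hlog (le_of_lt hapos)
    have harith : a * (b / a - 1) = b - a := by field_simp
    rw [harith] at this
    nlinarith

/-- Sum of a product weight times a function of one coordinate, when all other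
weights are normalized. -/
lemma helper1 {ι α : Type*} [Fintype ι] [DecidableEq ι] [Fintype α]
    (A : ι → α → ℝ) (k : ι) (hA : ∀ j, j ≠ k → ∑ a : α, A j a = 1) (F : α → ℝ) :
    ∑ h : ι → α, (∏ j, A j (h j)) * F (h k) = ∑ a : α, A k a * F a := by
  classical
  set G : ι → α → ℝ := fun j a => if j = k then A j a * F a else A j a with hG
  have key : ∀ h : ι → α, (∏ j, A j (h j)) * F (h k) = ∏ j, G j (h j) := by
    intro h
    rw [← Finset.mul_prod_erase Finset.univ (fun j => G j (h j)) (Finset.mem_univ k),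
      ← Finset.mul_prod_erase Finset.univ (fun j => A j (h j)) (Finset.mem_univ k)]
    have h1 : G k (h k) = A k (h k) * F (h k) := by simp [hG]
    have h2 : ∀ j ∈ Finset.univ.erase k, G j (h j) = A j (h j) := by
      intro j hj
      simp [hG, (Finset.mem_erase.mp hj).1]
    rw [h1, Finset.prod_congr rfl h2]
    ring
  simp only [key]
  have := Finset.prod_univ_sum (fun _ : ι => (Finset.univ : Finset α)) G
  rw [Fintype.piFinset_univ] at this
  rw [← this,
    ← Finset.mul_prod_erase Finset.univ (fun j => ∑ a : α, G j a) (Finset.mem_univ k)]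
  have h1 : ∑ a : α, G k a = ∑ a : α, A k a * F a := by simp [hG]
  have h2 : ∀ j ∈ Finset.univ.erase k, (∑ a : α, G j a) = 1 := by
    intro j hj
    have hj' := (Finset.mem_erase.mp hj).1
    simp only [hG, if_neg hj']
    exact hA j hj'
  rw [h1, Finset.prod_congr rfl h2, Finset.prod_const_one, mul_one]

end RealHelpers

section RealBridges

open scoped Classical

variable (w : ℕ → S → 𝒳 → PMF 𝒴) (p : ∀ n : ℕ, PMF (Fin n → 𝒳))

lemma margR_eq (n : ℕ) (k : Fin n) (u : 𝒳) :
    (marg p n k u).toReal = ∑ x : Fin n → 𝒳, if x k = u then (p n x).toReal else 0 := by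
  rw [marg, ENNReal.toReal_sum (fun x _ => ne_top_of_le_ne_top (pmf_ne_top _ x)
    (Set.indicator_le_self _ _ x))]
  congr 1; ext x
  by_cases h : x k = u
  · rw [Set.indicator_of_mem (show x ∈ {x' : Fin n → 𝒳 | x' k = u} from h), if_pos h]
  · rw [Set.indicator_of_notMem (show x ∉ {x' : Fin n → 𝒳 | x' k = u} from h), if_neg h]
    simp

/-- Grouping a sum over `x` of `p(x)·φ(x k)` into the marginal. -/
lemma helper2 (n : ℕ) (k : Fin n) (φ : 𝒳 → ℝ) :
    ∑ x : Fin n → 𝒳, (p n x).toReal * φ (x k) = ∑ u : 𝒳, (marg p n k u).toReal * φ u := by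
  simp only [margR_eq p, Finset.sum_mul]
  rw [Finset.sum_comm]
  congr 1; ext x
  have : ∀ u : 𝒳, (if x k = u then (p n x).toReal else 0) * φ u
      = if x k = u then (p n x).toReal * φ u else 0 := by
    intro u; by_cases h : x k = u <;> simp [h]
  simp only [this]
  rw [Finset.sum_ite_eq]
  simp

lemma sum_margR (n : ℕ) (k : Fin n) : ∑ u : 𝒳, (marg p n k u).toReal = 1 := by
  rw [← ENNReal.toReal_sum (fun u _ => marg_ne_top p n k u), sum_marg, ENNReal.toReal_one]

lemma sum_wR (k : ℕ) (s : S) (u : 𝒳) : ∑ v : 𝒴, ((w k s u) v).toReal = 1 := by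
  rw [← ENNReal.toReal_sum (fun v _ => pmf_ne_top _ v), sum_pmf_eq_one, ENNReal.toReal_one]

lemma sum_qsymR (n : ℕ) (k : Fin n) (s : S) : ∑ v : 𝒴, (qsym w p n k s v).toReal = 1 := by
  rw [← ENNReal.toReal_sum (fun v _ => qsym_ne_top w p n k s v), sum_qsym,
    ENNReal.toReal_one]

lemma sum_gR (n : ℕ) (k : Fin n) (s : S) :
    ∑ a : 𝒳 × 𝒴, (marg p n k a.1 * w k s a.1 a.2).toReal = 1 := by
  rw [← ENNReal.toReal_sum (fun a _ => ENNReal.mul_ne_top (marg_ne_top p n k a.1)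
    (pmf_ne_top _ a.2))]
  rw [Fintype.sum_prod_type]
  have : ∀ u : 𝒳, ∑ v : 𝒴, marg p n k u * w k s u v = marg p n k u := by
    intro u; rw [← Finset.mul_sum, sum_pmf_eq_one, mul_one]
  simp only [this, sum_marg, ENNReal.toReal_one]

end RealBridges

section Split

variable (w : ℕ → S → 𝒳 → PMF 𝒴) (p : ∀ n : ℕ, PMF (Fin n → 𝒳))

lemma qsym_pos (n : ℕ) (k : Fin n) (s : S) (u : 𝒳) (v : 𝒴)
    (hm : marg p n k u ≠ 0) (hw : w k s u v ≠ 0) : qsym w p n k s v ≠ 0 := by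
  intro h
  have hle := le_qsym w p n k s u v
  rw [h, le_zero_iff] at hle
  exact (mul_ne_zero hm hw) hle

/-- Pointwise splitting of the weighted log-ratio against the product output. -/
lemma split_prod (pw : ∀ n : ℕ, (Fin n → 𝒳) → ℝ≥0∞) (n : ℕ) (s : S)
    (hfin : ∀ x, pw n x ≠ ⊤)
    (hpos : ∀ x : Fin n → 𝒳, pw n x ≠ 0 → ∀ k : Fin n, marg p n k (x k) ≠ 0)
    (z : (Fin n → 𝒳) × (Fin n → 𝒴)) :
    (pw n z.1 * Wblock w n s z.1 z.2).toReal *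
      Real.log ((Wblock w n s z.1 z.2).toReal /
        ∏ k : Fin n, (qsym w p n k s (z.2 k)).toReal)
    = ∑ k : Fin n, (pw n z.1 * Wblock w n s z.1 z.2).toReal *
        Real.log ((w k s (z.1 k) (z.2 k)).toReal / (qsym w p n k s (z.2 k)).toReal) := by
  by_cases hz : (pw n z.1 * Wblock w n s z.1 z.2).toReal = 0
  · simp [hz]
  · have hzz : pw n z.1 * Wblock w n s z.1 z.2 ≠ 0 := by
      intro h; exact hz (by simp [h])
    have hp : pw n z.1 ≠ 0 := fun h => hzz (by simp [h])
    have hW : Wblock w n s z.1 z.2 ≠ 0 := fun h => hzz (by simp [h])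
    have hw : ∀ k : Fin n, w k s (z.1 k) (z.2 k) ≠ 0 := by
      rw [Wblock, Finset.prod_ne_zero_iff] at hW
      exact fun k => hW k (Finset.mem_univ k)
    have hq : ∀ k : Fin n, qsym w p n k s (z.2 k) ≠ 0 := fun k =>
      qsym_pos w p n k s (z.1 k) (z.2 k) (hpos z.1 hp k) (hw k)
    have hwR : ∀ k : Fin n, ((w k s (z.1 k) (z.2 k)) : ℝ≥0∞).toReal ≠ 0 := fun k =>
      ENNReal.toReal_ne_zero.mpr ⟨hw k, pmf_ne_top _ _⟩
    have hqR : ∀ k : Fin n, (qsym w p n k s (z.2 k)).toReal ≠ 0 := fun k =>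
      ENNReal.toReal_ne_zero.mpr ⟨hq k, qsym_ne_top w p n k s _⟩
    have hWR : (Wblock w n s z.1 z.2).toReal
        = ∏ k : Fin n, ((w k s (z.1 k) (z.2 k)) : ℝ≥0∞).toReal := by
      rw [Wblock, ENNReal.toReal_prod]
    rw [hWR, ← Finset.mul_sum]
    congr 1
    rw [Real.log_div (Finset.prod_ne_zero_iff.mpr (fun k _ => hwR k))
        (Finset.prod_ne_zero_iff.mpr (fun k _ => hqR k)),
      Real.log_prod (fun k _ => hwR k), Real.log_prod (fun k _ => hqR k),
      ← Finset.sum_sub_distrib]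
    exact Finset.sum_congr rfl fun k _ => (Real.log_div (hwR k) (hqR k)).symm

/-- Marginalization: expectation of a one-symbol log term under the true input. -/
lemma marginal_term_p (n : ℕ) (s : S) (k : Fin n) :
    ∑ z : (Fin n → 𝒳) × (Fin n → 𝒴), (p n z.1 * Wblock w n s z.1 z.2).toReal *
      Real.log ((w k s (z.1 k) (z.2 k)).toReal / (qsym w p n k s (z.2 k)).toReal)
    = Isym w p n k s := by
  set F : 𝒳 → 𝒴 → ℝ := fun u v =>
    Real.log ((w k s u v).toReal / (qsym w p n k s v).toReal) with hF
  have inner : ∀ x : Fin n → 𝒳,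
      ∑ y : Fin n → 𝒴, (p n x * Wblock w n s x y).toReal * F (x k) (y k)
      = (p n x).toReal * ∑ v : 𝒴, ((w k s (x k) v) : ℝ≥0∞).toReal * F (x k) v := by
    intro x
    have : ∀ y : Fin n → 𝒴, (p n x * Wblock w n s x y).toReal * F (x k) (y k)
        = (p n x).toReal *
          ((∏ j : Fin n, ((w j s (x j) (y j)) : ℝ≥0∞).toReal) * F (x k) (y k)) := by
      intro y
      rw [ENNReal.toReal_mul, Wblock, ENNReal.toReal_prod, mul_assoc]
    simp only [this]
    rw [← Finset.mul_sum]
    congr 1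
    exact helper1 (fun (j : Fin n) v => ((w j s (x j) v) : ℝ≥0∞).toReal) k
      (fun j _ => sum_wR w j s (x j)) (F (x k))
  change ∑ z : (Fin n → 𝒳) × (Fin n → 𝒴), (p n z.1 * Wblock w n s z.1 z.2).toReal *
    F (z.1 k) (z.2 k) = Isym w p n k s
  rw [Fintype.sum_prod_type]
  simp only [inner]
  rw [helper2 p n k (fun u => ∑ v : 𝒴, ((w k s u v) : ℝ≥0∞).toReal * F u v)]
  rw [Isym]
  refine Finset.sum_congr rfl fun u _ => ?_
  rw [Finset.mul_sum]
  refine Finset.sum_congr rfl fun v _ => ?_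
  rw [ENNReal.toReal_mul, hF, mul_assoc]

/-- Marginalization under the product input. -/
lemma marginal_term_tilde (n : ℕ) (s : S) (k : Fin n) :
    ∑ z : (Fin n → 𝒳) × (Fin n → 𝒴), (ptilde p n z.1 * Wblock w n s z.1 z.2).toReal *
      Real.log ((w k s (z.1 k) (z.2 k)).toReal / (qsym w p n k s (z.2 k)).toReal)
    = Isym w p n k s := by
  set F : 𝒳 → 𝒴 → ℝ := fun u v =>
    Real.log ((w k s u v).toReal / (qsym w p n k s v).toReal) with hF
  have inner : ∀ x : Fin n → 𝒳,
      ∑ y : Fin n → 𝒴, (ptilde p n x * Wblock w n s x y).toReal * F (x k) (y k)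
      = (ptilde p n x).toReal * ∑ v : 𝒴, ((w k s (x k) v) : ℝ≥0∞).toReal * F (x k) v := by
    intro x
    have : ∀ y : Fin n → 𝒴, (ptilde p n x * Wblock w n s x y).toReal * F (x k) (y k)
        = (ptilde p n x).toReal *
          ((∏ j : Fin n, ((w j s (x j) (y j)) : ℝ≥0∞).toReal) * F (x k) (y k)) := by
      intro y
      rw [ENNReal.toReal_mul, Wblock, ENNReal.toReal_prod, mul_assoc]
    simp only [this]
    rw [← Finset.mul_sum]
    congr 1
    exact helper1 (fun (j : Fin n) v => ((w j s (x j) v) : ℝ≥0∞).toReal) k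
      (fun j _ => sum_wR w j s (x j)) (F (x k))
  change ∑ z : (Fin n → 𝒳) × (Fin n → 𝒴), (ptilde p n z.1 * Wblock w n s z.1 z.2).toReal *
    F (z.1 k) (z.2 k) = Isym w p n k s
  rw [Fintype.sum_prod_type]
  simp only [inner]
  have outer : ∑ x : Fin n → 𝒳, (ptilde p n x).toReal *
        ∑ v : 𝒴, ((w k s (x k) v) : ℝ≥0∞).toReal * F (x k) v
      = ∑ u : 𝒳, (marg p n k u).toReal *
        ∑ v : 𝒴, ((w k s u v) : ℝ≥0∞).toReal * F u v := by
    have hpt : ∀ x : Fin n → 𝒳, (ptilde p n x).toReal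
        = ∏ j : Fin n, (marg p n j (x j)).toReal := by
      intro x; rw [ptilde, ENNReal.toReal_prod]
    simp only [hpt]
    exact helper1 (fun j u => (marg p n j u).toReal) k
      (fun j _ => sum_margR p n j)
      (fun u => ∑ v : 𝒴, ((w k s u v) : ℝ≥0∞).toReal * F u v)
  rw [outer, Isym]
  refine Finset.sum_congr rfl fun u _ => ?_
  rw [Finset.mul_sum]
  refine Finset.sum_congr rfl fun v _ => ?_
  rw [ENNReal.toReal_mul, hF, mul_assoc]

end Split

section Mean

variable (w : ℕ → S → 𝒳 → PMF 𝒴) (p : ∀ n : ℕ, PMF (Fin n → 𝒳))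

lemma ptilde_marg_pos (n : ℕ) (x : Fin n → 𝒳) (hx : ptilde p n x ≠ 0) (k : Fin n) :
    marg p n k (x k) ≠ 0 := by
  rw [ptilde, Finset.prod_ne_zero_iff] at hx
  exact hx k (Finset.mem_univ k)

/-- The mean of the information density rate under the product input is the
per-symbol mutual information average. -/
lemma exp_dens_tilde (n : ℕ) (s : S) :
    expW w (fun m => ptilde p m) n s (densRate w (fun m => ptilde p m) n s)
    = (1 / (n : ℝ)) * ∑ k : Fin n, Isym w p n k s := by
  unfold expW densRate
  have h1 : ∀ z : (Fin n → 𝒳) × (Fin n → 𝒴),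
      (ptilde p n z.1 * Wblock w n s z.1 z.2).toReal *
        ((1 / (n : ℝ)) * Real.log ((Wblock w n s z.1 z.2).toReal /
          (outDistW w (fun m => ptilde p m) n s z.2).toReal))
      = (1 / (n : ℝ)) * ((ptilde p n z.1 * Wblock w n s z.1 z.2).toReal *
          Real.log ((Wblock w n s z.1 z.2).toReal /
            ∏ k : Fin n, (qsym w p n k s (z.2 k)).toReal)) := by
    intro z
    rw [outDist_tilde_eq w p n s z.2, ENNReal.toReal_prod]
    ring
  simp only [h1]
  rw [← Finset.mul_sum]
  congr 1
  have h2 : ∀ z : (Fin n → 𝒳) × (Fin n → 𝒴),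
      (ptilde p n z.1 * Wblock w n s z.1 z.2).toReal *
        Real.log ((Wblock w n s z.1 z.2).toReal /
          ∏ k : Fin n, (qsym w p n k s (z.2 k)).toReal)
      = ∑ k : Fin n, (ptilde p n z.1 * Wblock w n s z.1 z.2).toReal *
          Real.log ((w k s (z.1 k) (z.2 k)).toReal / (qsym w p n k s (z.2 k)).toReal) :=
    split_prod w p (fun m => ptilde p m) n s (fun x => ptilde_ne_top p n x)
      (fun x hx k => ptilde_marg_pos p n x hx k)
  simp only [h2]
  rw [Finset.sum_comm]
  exact Finset.sum_congr rfl fun k _ => marginal_term_tilde w p n s k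

/-- The mean of the information density rate under the true input is at most the
per-symbol mutual information average (memorylessness + Gibbs). -/
lemma exp_dens_p_le (n : ℕ) (s : S) :
    expW w (fun m x => p m x) n s (densRate w (fun m x => p m x) n s)
    ≤ (1 / (n : ℝ)) * ∑ k : Fin n, Isym w p n k s := by
  unfold expW densRate
  -- notation
  set qt : (Fin n → 𝒴) → ℝ := fun y => ∏ k : Fin n, (qsym w p n k s (y k)).toReal with hqt
  set oR : (Fin n → 𝒴) → ℝ := fun y => (outDistW w (fun m x => p m x) n s y).toReal with hoR
  have hstep1 : ∀ z : (Fin n → 𝒳) × (Fin n → 𝒴),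
      (p n z.1 * Wblock w n s z.1 z.2).toReal *
        ((1 / (n : ℝ)) * Real.log ((Wblock w n s z.1 z.2).toReal / oR z.2))
      = (1 / (n : ℝ)) * ((p n z.1 * Wblock w n s z.1 z.2).toReal *
          Real.log ((Wblock w n s z.1 z.2).toReal / qt z.2)
        - (p n z.1 * Wblock w n s z.1 z.2).toReal * (Real.log (oR z.2) - Real.log (qt z.2))) := by
    intro z
    by_cases hz : (p n z.1 * Wblock w n s z.1 z.2).toReal = 0
    · simp [hz]
    · have hzz : p n z.1 * Wblock w n s z.1 z.2 ≠ 0 := fun h => hz (by simp [h])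
      have hp : p n z.1 ≠ 0 := fun h => hzz (by simp [h])
      have hW : Wblock w n s z.1 z.2 ≠ 0 := fun h => hzz (by simp [h])
      have hWR : (Wblock w n s z.1 z.2).toReal ≠ 0 :=
        ENNReal.toReal_ne_zero.mpr ⟨hW, Wblock_ne_top w n s _ _⟩
      have hout : outDistW w (fun m x => p m x) n s z.2 ≠ 0 := by
        intro h
        have hle := le_outDist w (fun m x => p m x) n s z.1 z.2
        rw [h, le_zero_iff] at hle
        exact hzz hle
      have houtR : oR z.2 ≠ 0 := ENNReal.toReal_ne_zero.mpr ⟨hout,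
        ne_top_of_le_ne_top ENNReal.one_ne_top
          (outDist_le_one w (fun m x => p m x) (fun m => sum_pmf_eq_one _) n s z.2)⟩
      have hqtk : ∀ k : Fin n, (qsym w p n k s (z.2 k)).toReal ≠ 0 := by
        intro k
        have hw : ∀ k : Fin n, w k s (z.1 k) (z.2 k) ≠ 0 := by
          have := hW; rw [Wblock, Finset.prod_ne_zero_iff] at this
          exact fun k => this k (Finset.mem_univ k)
        exact ENNReal.toReal_ne_zero.mpr
          ⟨qsym_pos w p n k s (z.1 k) (z.2 k) (marg_ne_zero p n k z.1 hp) (hw k),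
            qsym_ne_top w p n k s _⟩
      have hqtR : qt z.2 ≠ 0 := Finset.prod_ne_zero_iff.mpr fun k _ => hqtk k
      rw [Real.log_div hWR houtR, Real.log_div hWR hqtR]
      ring
  change ∑ z : (Fin n → 𝒳) × (Fin n → 𝒴), (p n z.1 * Wblock w n s z.1 z.2).toReal *
    ((1 / (n : ℝ)) * Real.log ((Wblock w n s z.1 z.2).toReal / oR z.2)) ≤ _
  simp only [hstep1]
  rw [← Finset.mul_sum]
  have hn : (0 : ℝ) ≤ 1 / (n : ℝ) := by positivity
  refine mul_le_mul_of_nonneg_left ?_ hn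
  rw [Finset.sum_sub_distrib]
  have hmain : ∑ z : (Fin n → 𝒳) × (Fin n → 𝒴),
      (p n z.1 * Wblock w n s z.1 z.2).toReal *
        Real.log ((Wblock w n s z.1 z.2).toReal / qt z.2) = ∑ k : Fin n, Isym w p n k s := by
    have h2 := split_prod w p (fun m x => p m x) n s (fun x => pmf_ne_top _ x)
      (fun x hx k => marg_ne_zero p n k x hx)
    simp only [hqt, h2]
    rw [Finset.sum_comm]
    exact Finset.sum_congr rfl fun k _ => marginal_term_p w p n s k
  rw [hmain]
  -- it remains to show the correction term is nonnegative
  have hcorr : 0 ≤ ∑ z : (Fin n → 𝒳) × (Fin n → 𝒴),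
      (p n z.1 * Wblock w n s z.1 z.2).toReal * (Real.log (oR z.2) - Real.log (qt z.2)) := by
    have hgroup : ∑ z : (Fin n → 𝒳) × (Fin n → 𝒴),
        (p n z.1 * Wblock w n s z.1 z.2).toReal * (Real.log (oR z.2) - Real.log (qt z.2))
        = ∑ y : Fin n → 𝒴, oR y * (Real.log (oR y) - Real.log (qt y)) := by
      rw [Fintype.sum_prod_type_right]
      refine Finset.sum_congr rfl fun y _ => ?_
      dsimp only
      rw [← Finset.sum_mul]
      congr 1
      rw [hoR]
      simp only [outDistW]
      rw [ENNReal.toReal_sum]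
      exact fun x _ => ENNReal.mul_ne_top (pmf_ne_top _ x) (Wblock_ne_top w n s x y)
    rw [hgroup]
    have hpt : ∀ y : Fin n → 𝒴, oR y - qt y ≤ oR y * (Real.log (oR y) - Real.log (qt y)) := by
      intro y
      refine gibbs_pt ENNReal.toReal_nonneg (Finset.prod_nonneg fun k _ =>
        ENNReal.toReal_nonneg) ?_
      intro hne
      have hout : outDistW w (fun m x => p m x) n s y ≠ 0 := by
        intro h; exact hne (by rw [hoR]; simp [h])
      -- extract a nonzero term
      obtain ⟨x, -, hx⟩ := Finset.exists_ne_zero_of_sum_ne_zero (by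
        rw [outDistW] at hout; exact hout)
      have hp : p n x ≠ 0 := fun h => hx (by simp [h])
      have hW : Wblock w n s x y ≠ 0 := fun h => hx (by simp [h])
      have hw : ∀ k : Fin n, w k s (x k) (y k) ≠ 0 := by
        rw [Wblock, Finset.prod_ne_zero_iff] at hW
        exact fun k => hW k (Finset.mem_univ k)
      exact Finset.prod_ne_zero_iff.mpr fun k _ => ENNReal.toReal_ne_zero.mpr
        ⟨qsym_pos w p n k s (x k) (y k) (marg_ne_zero p n k x hp) (hw k),
          qsym_ne_top w p n k s _⟩
    calc (0 : ℝ) = ∑ y : Fin n → 𝒴, oR y - ∑ y : Fin n → 𝒴, qt y := by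
          have hsum1 : ∑ y : Fin n → 𝒴, oR y = 1 := by
            rw [hoR]
            simp only
            rw [← ENNReal.toReal_sum (fun y _ => ne_top_of_le_ne_top ENNReal.one_ne_top
              (outDist_le_one w (fun m x => p m x) (fun m => sum_pmf_eq_one _) n s y))]
            rw [sum_outDist w (fun m x => p m x) (fun m => sum_pmf_eq_one _) n s]
            exact ENNReal.toReal_one
          have hsum2 : ∑ y : Fin n → 𝒴, qt y = 1 := by
            rw [hqt]
            simp only
            have : ∀ y : Fin n → 𝒴, ∏ k : Fin n, (qsym w p n k s (y k)).toReal
                = (∏ k : Fin n, qsym w p n k s (y k)).toReal := by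
              intro y; rw [ENNReal.toReal_prod]
            simp only [this]
            have h5 : ∀ y : Fin n → 𝒴, (∏ k : Fin n, qsym w p n k s (y k))
                = outDistW w (fun m => ptilde p m) n s y := fun y =>
              (outDist_tilde_eq w p n s y).symm
            simp only [h5]
            rw [← ENNReal.toReal_sum (fun y _ => ne_top_of_le_ne_top ENNReal.one_ne_top
              (outDist_le_one w (fun m => ptilde p m) (fun m => sum_ptilde p m) n s y))]
            rw [sum_outDist w (fun m => ptilde p m) (fun m => sum_ptilde p m) n s]
            exact ENNReal.toReal_one
          rw [hsum1, hsum2]; ring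
      _ = ∑ y : Fin n → 𝒴, (oR y - qt y) := (Finset.sum_sub_distrib _ _).symm
      _ ≤ ∑ y : Fin n → 𝒴, oR y * (Real.log (oR y) - Real.log (qt y)) :=
          Finset.sum_le_sum fun y _ => hpt y
  linarith

end Mean

section Bounds

variable (w : ℕ → S → 𝒳 → PMF 𝒴) (p : ∀ n : ℕ, PMF (Fin n → 𝒳))

lemma toReal_le_one {a : ℝ≥0∞} (h : a ≤ 1) : a.toReal ≤ 1 := by
  calc a.toReal ≤ (1 : ℝ≥0∞).toReal := ENNReal.toReal_mono ENNReal.one_ne_top h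
    _ = 1 := ENNReal.toReal_one

lemma Isym_nonneg (n : ℕ) (k : Fin n) (s : S) : 0 ≤ Isym w p n k s := by
  have key : ∀ (u : 𝒳) (v : 𝒴),
      (marg p n k u * w k s u v).toReal - (marg p n k u).toReal * (qsym w p n k s v).toReal
      ≤ (marg p n k u * w k s u v).toReal *
        Real.log ((w k s u v).toReal / (qsym w p n k s v).toReal) := by
    intro u v
    by_cases hg : (marg p n k u * w k s u v).toReal = 0
    · rw [hg]; simp
      positivity
    · have hgne : marg p n k u * w k s u v ≠ 0 := fun h => hg (by simp [h])
      have hm : marg p n k u ≠ 0 := fun h => hgne (by simp [h])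
      have hw : w k s u v ≠ 0 := fun h => hgne (by simp [h])
      have hq : qsym w p n k s v ≠ 0 := qsym_pos w p n k s u v hm hw
      have hmR : (0:ℝ) < (marg p n k u).toReal :=
        ENNReal.toReal_pos hm (marg_ne_top p n k u)
      have hwR : (0:ℝ) < ((w k s u v) : ℝ≥0∞).toReal :=
        ENNReal.toReal_pos hw (pmf_ne_top _ _)
      have hqR : (0:ℝ) < (qsym w p n k s v).toReal :=
        ENNReal.toReal_pos hq (qsym_ne_top w p n k s v)
      have hgr : (marg p n k u * w k s u v).toReal
          = (marg p n k u).toReal * ((w k s u v) : ℝ≥0∞).toReal := ENNReal.toReal_mul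
      have hgibbs := gibbs_pt (a := (marg p n k u * w k s u v).toReal)
        (b := (marg p n k u).toReal * (qsym w p n k s v).toReal)
        ENNReal.toReal_nonneg (by positivity) (fun _ => by positivity)
      have hlogeq : Real.log (marg p n k u * w k s u v).toReal -
          Real.log ((marg p n k u).toReal * (qsym w p n k s v).toReal)
          = Real.log (((w k s u v) : ℝ≥0∞).toReal / (qsym w p n k s v).toReal) := by
        rw [hgr, Real.log_mul (ne_of_gt hmR) (ne_of_gt hwR),
          Real.log_mul (ne_of_gt hmR) (ne_of_gt hqR),
          Real.log_div (ne_of_gt hwR) (ne_of_gt hqR)]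
        ring
      rw [hlogeq] at hgibbs
      exact hgibbs
  have hsum : (0:ℝ) = ∑ u : 𝒳, ∑ v : 𝒴, ((marg p n k u * w k s u v).toReal -
      (marg p n k u).toReal * (qsym w p n k s v).toReal) := by
    simp only [Finset.sum_sub_distrib]
    have h1 : ∑ u : 𝒳, ∑ v : 𝒴, (marg p n k u * w k s u v).toReal = 1 := by
      have := sum_gR w p n k s
      rw [Fintype.sum_prod_type] at this
      exact this
    have h2 : ∑ u : 𝒳, ∑ v : 𝒴, (marg p n k u).toReal * (qsym w p n k s v).toReal = 1 := by
      have : ∀ u : 𝒳, ∑ v : 𝒴, (marg p n k u).toReal * (qsym w p n k s v).toReal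
          = (marg p n k u).toReal := by
        intro u; rw [← Finset.mul_sum, sum_qsymR, mul_one]
      simp only [this, sum_margR]
    rw [h1, h2]; ring
  rw [Isym]
  calc (0:ℝ) = ∑ u : 𝒳, ∑ v : 𝒴, ((marg p n k u * w k s u v).toReal -
        (marg p n k u).toReal * (qsym w p n k s v).toReal) := hsum
    _ ≤ _ := Finset.sum_le_sum fun u _ => Finset.sum_le_sum fun v _ => key u v

lemma Isym_le_log [Nonempty 𝒴] (n : ℕ) (k : Fin n) (s : S) :
    Isym w p n k s ≤ Real.log (Fintype.card 𝒴) := by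
  have hcard : (1:ℝ) ≤ (Fintype.card 𝒴 : ℝ) := by
    exact_mod_cast Fintype.card_pos
  -- step 1: bound each term by the entropy term
  have step1 : Isym w p n k s ≤ ∑ u : 𝒳, ∑ v : 𝒴,
      (marg p n k u * w k s u v).toReal * (-Real.log (qsym w p n k s v).toReal) := by
    rw [Isym]
    refine Finset.sum_le_sum fun u _ => Finset.sum_le_sum fun v _ => ?_
    by_cases hg : (marg p n k u * w k s u v).toReal = 0
    · rw [hg]; simp
    · have hgne : marg p n k u * w k s u v ≠ 0 := fun h => hg (by simp [h])
      have hm : marg p n k u ≠ 0 := fun h => hgne (by simp [h])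
      have hw : w k s u v ≠ 0 := fun h => hgne (by simp [h])
      have hq : qsym w p n k s v ≠ 0 := qsym_pos w p n k s u v hm hw
      have hwR : (0:ℝ) < ((w k s u v) : ℝ≥0∞).toReal :=
        ENNReal.toReal_pos hw (pmf_ne_top _ _)
      have hqR : (0:ℝ) < (qsym w p n k s v).toReal :=
        ENNReal.toReal_pos hq (qsym_ne_top w p n k s v)
      refine mul_le_mul_of_nonneg_left ?_ ENNReal.toReal_nonneg
      rw [Real.log_div (ne_of_gt hwR) (ne_of_gt hqR)]
      have : Real.log ((w k s u v) : ℝ≥0∞).toReal ≤ 0 :=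
        Real.log_nonpos ENNReal.toReal_nonneg (toReal_le_one (pmf_le_one _ _))
      linarith
  -- step 2: collapse the u-sum
  have step2 : ∑ u : 𝒳, ∑ v : 𝒴,
      (marg p n k u * w k s u v).toReal * (-Real.log (qsym w p n k s v).toReal)
      = ∑ v : 𝒴, (qsym w p n k s v).toReal * (-Real.log (qsym w p n k s v).toReal) := by
    rw [Finset.sum_comm]
    refine Finset.sum_congr rfl fun v _ => ?_
    rw [← Finset.sum_mul]
    congr 1
    rw [qsym, ENNReal.toReal_sum (fun u _ => ENNReal.mul_ne_top (marg_ne_top p n k u)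
      (pmf_ne_top _ _))]
  -- step 3: entropy bound
  have step3 : ∑ v : 𝒴, (qsym w p n k s v).toReal * (-Real.log (qsym w p n k s v).toReal)
      ≤ Real.log (Fintype.card 𝒴) := by
    have hkey : ∀ v : 𝒴, (qsym w p n k s v).toReal - (Fintype.card 𝒴 : ℝ)⁻¹
        ≤ (qsym w p n k s v).toReal * (Real.log (qsym w p n k s v).toReal -
          Real.log (Fintype.card 𝒴 : ℝ)⁻¹) :=
      fun v => gibbs_pt ENNReal.toReal_nonneg (by positivity) (fun _ => by positivity)
    have hsum := Finset.sum_le_sum fun v (_ : v ∈ Finset.univ) => hkey v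
    rw [Finset.sum_sub_distrib, sum_qsymR w p n k] at hsum
    have hc : ∑ _v : 𝒴, (Fintype.card 𝒴 : ℝ)⁻¹ = 1 := by
      rw [Finset.sum_const, Finset.card_univ, nsmul_eq_mul]
      field_simp
    rw [hc] at hsum
    have hexp : ∀ v : 𝒴, (qsym w p n k s v).toReal * (Real.log (qsym w p n k s v).toReal -
        Real.log (Fintype.card 𝒴 : ℝ)⁻¹)
        = (qsym w p n k s v).toReal * Real.log (qsym w p n k s v).toReal +
          (qsym w p n k s v).toReal * Real.log (Fintype.card 𝒴 : ℝ) := by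
      intro v
      rw [Real.log_inv]
      ring
    rw [Finset.sum_congr rfl (fun v _ => hexp v), Finset.sum_add_distrib,
      ← Finset.sum_mul, sum_qsymR w p n k, one_mul] at hsum
    have : -Real.log (Fintype.card 𝒴 : ℝ)
        ≤ ∑ v : 𝒴, (qsym w p n k s v).toReal * Real.log (qsym w p n k s v).toReal := by
      linarith
    have heq : ∑ v : 𝒴, (qsym w p n k s v).toReal * (-Real.log (qsym w p n k s v).toReal)
        = -∑ v : 𝒴, (qsym w p n k s v).toReal * Real.log (qsym w p n k s v).toReal := by
      rw [← Finset.sum_neg_distrib]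
      exact Finset.sum_congr rfl fun v _ => by ring
    rw [heq]
    linarith
  calc Isym w p n k s ≤ _ := step1
    _ = _ := step2
    _ ≤ _ := step3

lemma msum_nonneg (n : ℕ) (s : S) : 0 ≤ (1 / (n : ℝ)) * ∑ k : Fin n, Isym w p n k s := by
  have : (0:ℝ) ≤ ∑ k : Fin n, Isym w p n k s :=
    Finset.sum_nonneg fun k _ => Isym_nonneg w p n k s
  positivity

lemma msum_le_log [Nonempty 𝒴] (n : ℕ) (s : S) :
    (1 / (n : ℝ)) * ∑ k : Fin n, Isym w p n k s ≤ Real.log (Fintype.card 𝒴) := by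
  have hlog0 : (0:ℝ) ≤ Real.log (Fintype.card 𝒴) :=
    Real.log_nonneg (by exact_mod_cast Fintype.card_pos)
  rcases Nat.eq_zero_or_pos n with hn | hn
  · subst hn; simp [hlog0]
  · have hsum : ∑ k : Fin n, Isym w p n k s ≤ (n : ℝ) * Real.log (Fintype.card 𝒴) := by
      calc ∑ k : Fin n, Isym w p n k s ≤ ∑ _k : Fin n, Real.log (Fintype.card 𝒴) :=
            Finset.sum_le_sum fun k _ => Isym_le_log w p n k s
        _ = (n : ℝ) * Real.log (Fintype.card 𝒴) := by
            rw [Finset.sum_const, Finset.card_univ, Fintype.card_fin, nsmul_eq_mul]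
    have hnpos : (0:ℝ) < (n:ℝ) := by exact_mod_cast hn
    calc (1 / (n : ℝ)) * ∑ k : Fin n, Isym w p n k s
        ≤ (1 / (n : ℝ)) * ((n : ℝ) * Real.log (Fintype.card 𝒴)) := by
          exact mul_le_mul_of_nonneg_left hsum (by positivity)
      _ = Real.log (Fintype.card 𝒴) := by field_simp

end Bounds

section Prob

variable (w : ℕ → S → 𝒳 → PMF 𝒴) (p : ∀ n : ℕ, PMF (Fin n → 𝒳))

/-- Real-valued mass of an event. -/
def massR (w : ℕ → S → 𝒳 → PMF 𝒴) (pw : ∀ n : ℕ, (Fin n → 𝒳) → ℝ≥0∞)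
    (n : ℕ) (s : S) (E : Set ((Fin n → 𝒳) × (Fin n → 𝒴))) : ℝ :=
  ∑ z : (Fin n → 𝒳) × (Fin n → 𝒴),
    E.indicator (fun z' => (pw n z'.1 * Wblock w n s z'.1 z'.2).toReal) z

lemma massR_nonneg (pw : ∀ n : ℕ, (Fin n → 𝒳) → ℝ≥0∞) (n : ℕ) (s : S)
    (E : Set ((Fin n → 𝒳) × (Fin n → 𝒴))) : 0 ≤ massR w pw n s E :=
  Finset.sum_nonneg fun z _ => Set.indicator_nonneg (fun _ _ => ENNReal.toReal_nonneg) z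

lemma probEventW_eq_ofReal (pw : ∀ n : ℕ, (Fin n → 𝒳) → ℝ≥0∞) (n : ℕ) (s : S)
    (hfin : ∀ x, pw n x ≠ ⊤) (E : Set ((Fin n → 𝒳) × (Fin n → 𝒴))) :
    probEventW w pw n s E = ENNReal.ofReal (massR w pw n s E) := by
  rw [probEventW, massR, ENNReal.ofReal_sum_of_nonneg
    (fun z _ => Set.indicator_nonneg (fun _ _ => ENNReal.toReal_nonneg) z)]
  refine Finset.sum_congr rfl fun z _ => ?_
  by_cases hz : z ∈ E
  · rw [Set.indicator_of_mem hz, Set.indicator_of_mem hz, ENNReal.ofReal_toReal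
      (ENNReal.mul_ne_top (hfin z.1) (Wblock_ne_top w n s z.1 z.2))]
  · rw [Set.indicator_of_notMem hz, Set.indicator_of_notMem hz, ENNReal.ofReal_zero]

lemma sum_jointR (pw : ∀ n : ℕ, (Fin n → 𝒳) → ℝ≥0∞) (n : ℕ) (s : S)
    (hfin : ∀ x, pw n x ≠ ⊤) (hpw : ∑ x : Fin n → 𝒳, pw n x = 1) :
    ∑ z : (Fin n → 𝒳) × (Fin n → 𝒴), (pw n z.1 * Wblock w n s z.1 z.2).toReal = 1 := by
  rw [← ENNReal.toReal_sum (fun z _ => ENNReal.mul_ne_top (hfin z.1)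
    (Wblock_ne_top w n s z.1 z.2))]
  rw [Fintype.sum_prod_type]
  have : ∀ x : Fin n → 𝒳, ∑ y : Fin n → 𝒴, pw n x * Wblock w n s x y = pw n x := by
    intro x; rw [← Finset.mul_sum, sum_Wblock, mul_one]
  simp only [this, hpw, ENNReal.toReal_one]

lemma massR_univ (pw : ∀ n : ℕ, (Fin n → 𝒳) → ℝ≥0∞) (n : ℕ) (s : S)
    (hfin : ∀ x, pw n x ≠ ⊤) (hpw : ∑ x : Fin n → 𝒳, pw n x = 1) :
    massR w pw n s Set.univ = 1 := by
  rw [massR]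
  simp only [Set.indicator_univ]
  exact sum_jointR w pw n s hfin hpw

lemma massR_add_compl (pw : ∀ n : ℕ, (Fin n → 𝒳) → ℝ≥0∞) (n : ℕ) (s : S)
    (E : Set ((Fin n → 𝒳) × (Fin n → 𝒴)))
    (hfin : ∀ x, pw n x ≠ ⊤) (hpw : ∑ x : Fin n → 𝒳, pw n x = 1) :
    massR w pw n s E + massR w pw n s Eᶜ = 1 := by
  rw [massR, massR, ← Finset.sum_add_distrib]
  have : ∀ z : (Fin n → 𝒳) × (Fin n → 𝒴),
      E.indicator (fun z' => (pw n z'.1 * Wblock w n s z'.1 z'.2).toReal) z +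
        Eᶜ.indicator (fun z' => (pw n z'.1 * Wblock w n s z'.1 z'.2).toReal) z
      = (pw n z.1 * Wblock w n s z.1 z.2).toReal := by
    intro z
    exact congrFun (Set.indicator_self_add_compl E
      (fun z' => (pw n z'.1 * Wblock w n s z'.1 z'.2).toReal)) z
  simp only [this]
  exact sum_jointR w pw n s hfin hpw

lemma massR_mono (pw : ∀ n : ℕ, (Fin n → 𝒳) → ℝ≥0∞) (n : ℕ) (s : S)
    {E F : Set ((Fin n → 𝒳) × (Fin n → 𝒴))} (hEF : E ⊆ F) :
    massR w pw n s E ≤ massR w pw n s F :=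
  Finset.sum_le_sum fun z _ => Set.indicator_le_indicator_of_subset hEF
    (fun _ => ENNReal.toReal_nonneg) z

/-- Chebyshev: mass of a deviation event is bounded by variance over `δ²`. -/
lemma cheb_mass (n : ℕ) (s : S) {δ : ℝ} (hδ : 0 < δ)
    (E : Set ((Fin n → 𝒳) × (Fin n → 𝒴)))
    (hE : ∀ z ∈ E, δ ≤ |densRate w (fun m => ptilde p m) n s z -
      expW w (fun m => ptilde p m) n s (densRate w (fun m => ptilde p m) n s)|) :
    massR w (fun m => ptilde p m) n s E ≤ varTilde w p n s / δ ^ 2 := by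
  rw [le_div_iff₀ (by positivity)]
  rw [varTilde, expW, massR, Finset.sum_mul]
  refine Finset.sum_le_sum fun z _ => ?_
  by_cases hz : z ∈ E
  · rw [Set.indicator_of_mem hz]
    refine mul_le_mul_of_nonneg_left ?_ ENNReal.toReal_nonneg
    calc δ ^ 2 ≤ |densRate w (fun m => ptilde p m) n s z -
          expW w (fun m => ptilde p m) n s (densRate w (fun m => ptilde p m) n s)| ^ 2 :=
          pow_le_pow_left₀ hδ.le (hE z hz) 2
      _ = _ := sq_abs _
  · rw [Set.indicator_of_notMem hz, zero_mul]
    positivity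

/-- Tail lower bound for the information density under the true input. -/
lemma tail_bound (n : ℕ) (s : S) (A : Set ((Fin n → 𝒳) × (Fin n → 𝒴))) :
    -(1 / (n : ℝ)) ≤ ∑ z : (Fin n → 𝒳) × (Fin n → 𝒴),
      A.indicator (fun z' => (p n z'.1 * Wblock w n s z'.1 z'.2).toReal *
        densRate w (fun m x => p m x) n s z') z := by
  set μ : (Fin n → 𝒳) × (Fin n → 𝒴) → ℝ :=
    fun z => (p n z.1 * Wblock w n s z.1 z.2).toReal with hμ
  set ν : (Fin n → 𝒳) × (Fin n → 𝒴) → ℝ :=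
    fun z => (p n z.1).toReal * (outDistW w (fun m x => p m x) n s z.2).toReal with hν
  have hpt : ∀ z : (Fin n → 𝒳) × (Fin n → 𝒴),
      (1 / (n : ℝ)) * (μ z - ν z) ≤ μ z * densRate w (fun m x => p m x) n s z := by
    intro z
    rw [densRate]
    have hinner : μ z - ν z ≤ μ z * Real.log ((Wblock w n s z.1 z.2).toReal /
        (outDistW w (fun m x => p m x) n s z.2).toReal) := by
      by_cases hz : μ z = 0
      · rw [hz]
        simp only [zero_mul, zero_sub, sub_zero]
        have : 0 ≤ ν z := by rw [hν]; positivity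
        -- goal : 0 - ν z ≤ 0
        simp only [hμ, hz] at *
        linarith
      · have hzz : p n z.1 * Wblock w n s z.1 z.2 ≠ 0 := fun h => hz
          (show ((p n z.1 * Wblock w n s z.1 z.2).toReal) = 0 by rw [h, ENNReal.toReal_zero])
        have hp : p n z.1 ≠ 0 := fun h => hzz (by simp [h])
        have hW : Wblock w n s z.1 z.2 ≠ 0 := fun h => hzz (by simp [h])
        have hpR : (0:ℝ) < (p n z.1).toReal := ENNReal.toReal_pos hp (pmf_ne_top _ _)
        have hWR : (0:ℝ) < (Wblock w n s z.1 z.2).toReal :=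
          ENNReal.toReal_pos hW (Wblock_ne_top w n s _ _)
        have hout : outDistW w (fun m x => p m x) n s z.2 ≠ 0 := by
          intro h
          have hle := le_outDist w (fun m x => p m x) n s z.1 z.2
          rw [h, le_zero_iff] at hle
          exact hzz hle
        have houtR : (0:ℝ) < (outDistW w (fun m x => p m x) n s z.2).toReal :=
          ENNReal.toReal_pos hout (ne_top_of_le_ne_top ENNReal.one_ne_top
            (outDist_le_one w (fun m x => p m x) (fun m => sum_pmf_eq_one _) n s z.2))
        have hμeq : μ z = (p n z.1).toReal * (Wblock w n s z.1 z.2).toReal := by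
          rw [hμ]; exact ENNReal.toReal_mul
        have hμpos : 0 < μ z := by rw [hμeq]; positivity
        have hνpos : 0 < ν z := by rw [hν]; positivity
        have hgibbs := gibbs_pt (a := μ z) (b := ν z) hμpos.le hνpos.le (fun _ => ne_of_gt hνpos)
        have hlogeq : Real.log (μ z) - Real.log (ν z)
            = Real.log ((Wblock w n s z.1 z.2).toReal /
              (outDistW w (fun m x => p m x) n s z.2).toReal) := by
          rw [hμeq, hν, Real.log_mul (ne_of_gt hpR) (ne_of_gt hWR),
            Real.log_mul (ne_of_gt hpR) (ne_of_gt houtR),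
            Real.log_div (ne_of_gt hWR) (ne_of_gt houtR)]
          ring
        rw [hlogeq] at hgibbs
        exact hgibbs
    have hn : (0:ℝ) ≤ 1 / (n : ℝ) := by positivity
    calc (1 / (n : ℝ)) * (μ z - ν z)
        ≤ (1 / (n : ℝ)) * (μ z * Real.log ((Wblock w n s z.1 z.2).toReal /
            (outDistW w (fun m x => p m x) n s z.2).toReal)) :=
          mul_le_mul_of_nonneg_left hinner hn
      _ = μ z * ((1 / (n : ℝ)) * Real.log ((Wblock w n s z.1 z.2).toReal /
            (outDistW w (fun m x => p m x) n s z.2).toReal)) := by ring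
  have hind : ∀ z : (Fin n → 𝒳) × (Fin n → 𝒴),
      (1 / (n : ℝ)) * (A.indicator μ z - A.indicator ν z)
      ≤ A.indicator (fun z' => μ z' * densRate w (fun m x => p m x) n s z') z := by
    intro z
    by_cases hz : z ∈ A
    · rw [Set.indicator_of_mem hz, Set.indicator_of_mem hz, Set.indicator_of_mem hz]
      exact hpt z
    · rw [Set.indicator_of_notMem hz, Set.indicator_of_notMem hz,
        Set.indicator_of_notMem hz]
      simp
  have hsum := Finset.sum_le_sum fun z (_ : z ∈ Finset.univ) => hind z
  have hlhs : ∑ z : (Fin n → 𝒳) × (Fin n → 𝒴),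
      (1 / (n : ℝ)) * (A.indicator μ z - A.indicator ν z)
      = (1 / (n : ℝ)) * (∑ z : (Fin n → 𝒳) × (Fin n → 𝒴), A.indicator μ z
        - ∑ z : (Fin n → 𝒳) × (Fin n → 𝒴), A.indicator ν z) := by
    rw [← Finset.mul_sum, Finset.sum_sub_distrib]
  rw [hlhs] at hsum
  have h1 : 0 ≤ ∑ z : (Fin n → 𝒳) × (Fin n → 𝒴), A.indicator μ z :=
    Finset.sum_nonneg fun z _ => Set.indicator_nonneg
      (fun _ _ => ENNReal.toReal_nonneg) z
  have h2 : ∑ z : (Fin n → 𝒳) × (Fin n → 𝒴), A.indicator ν z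
      ≤ ∑ z : (Fin n → 𝒳) × (Fin n → 𝒴), ν z := by
    refine Finset.sum_le_sum fun z _ => Set.indicator_le_self' (fun z' _ => ?_) z
    rw [hν]; positivity
  have h3 : ∑ z : (Fin n → 𝒳) × (Fin n → 𝒴), ν z = 1 := by
    rw [hν, Fintype.sum_prod_type]
    have : ∀ x : Fin n → 𝒳, ∑ y : Fin n → 𝒴,
        (p n x).toReal * (outDistW w (fun m x => p m x) n s y).toReal
        = (p n x).toReal := by
      intro x
      rw [← Finset.mul_sum]
      rw [← ENNReal.toReal_sum (fun y _ => ne_top_of_le_ne_top ENNReal.one_ne_top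
        (outDist_le_one w (fun m x => p m x) (fun m => sum_pmf_eq_one _) n s y))]
      rw [sum_outDist w (fun m x => p m x) (fun m => sum_pmf_eq_one _) n s]
      rw [ENNReal.toReal_one, mul_one]
    simp only [this]
    rw [← ENNReal.toReal_sum (fun x _ => pmf_ne_top _ x), sum_pmf_eq_one,
      ENNReal.toReal_one]
  have hνbound : (1 / (n : ℝ)) * (∑ z : (Fin n → 𝒳) × (Fin n → 𝒴), A.indicator μ z
      - ∑ z : (Fin n → 𝒳) × (Fin n → 𝒴), A.indicator ν z) ≥ -(1 / (n : ℝ)) := by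
    have hn : (0:ℝ) ≤ 1 / (n : ℝ) := by positivity
    have : ∑ z : (Fin n → 𝒳) × (Fin n → 𝒴), A.indicator μ z
        - ∑ z : (Fin n → 𝒳) × (Fin n → 𝒴), A.indicator ν z ≥ -1 := by
      have := h2.trans_eq h3
      linarith
    nlinarith
  linarith

end Prob

section Main

variable (w : ℕ → S → 𝒳 → PMF 𝒴) (p : ∀ n : ℕ, PMF (Fin n → 𝒳))

/-- The per-symbol mutual information average. -/
def mAvg (w : ℕ → S → 𝒳 → PMF 𝒴) (p : ∀ n : ℕ, PMF (Fin n → 𝒳)) (n : ℕ) (s : S) : ℝ :=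
  (1 / (n : ℝ)) * ∑ k : Fin n, Isym w p n k s

/-- Its infimum over states. -/
def uInf (w : ℕ → S → 𝒳 → PMF 𝒴) (p : ∀ n : ℕ, PMF (Fin n → 𝒳)) (n : ℕ) : ℝ :=
  ⨅ s : S, mAvg w p n s

lemma varTilde_nonneg (n : ℕ) (s : S) : 0 ≤ varTilde w p n s :=
  Finset.sum_nonneg fun z _ => mul_nonneg ENNReal.toReal_nonneg (sq_nonneg _)

section WithS

variable [Nonempty S] [Nonempty 𝒴]

lemma mAvg_bddBelow (n : ℕ) : BddBelow (Set.range fun s : S => mAvg w p n s) :=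
  ⟨0, by rintro x ⟨s, rfl⟩; exact msum_nonneg w p n s⟩

lemma uInf_nonneg (n : ℕ) : 0 ≤ uInf w p n :=
  le_ciInf fun s => msum_nonneg w p n s

lemma uInf_le_mAvg (n : ℕ) (s : S) : uInf w p n ≤ mAvg w p n s :=
  ciInf_le (mAvg_bddBelow w p n) s

lemma uInf_le_log (n : ℕ) : uInf w p n ≤ Real.log (Fintype.card 𝒴) :=
  le_trans (uInf_le_mAvg w p n (Classical.arbitrary S)) (msum_le_log w p n _)

lemma uInf_bddUnder_ge : IsBoundedUnder (· ≥ ·) atTop (uInf w p) :=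
  isBoundedUnder_of ⟨0, fun n => uInf_nonneg w p n⟩

lemma uInf_cobdd : IsCoboundedUnder (· ≥ ·) atTop (uInf w p) :=
  (isBoundedUnder_of ⟨Real.log (Fintype.card 𝒴), fun n => uInf_le_log w p n⟩ :
    IsBoundedUnder (· ≤ ·) atTop (uInf w p)).isCoboundedUnder_ge

/-- Any rate strictly below the liminf of the per-symbol averages is achievable
for the independent input. -/
lemma keyB
    (hvar : Tendsto (fun n => ⨆ s : S, ENNReal.ofReal (varTilde w p n s)) atTop (nhds 0))
    (R : ℝ) (hRL : R < Filter.liminf (uInf w p) atTop) :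
    R ∈ cinfISetW w (fun n => ptilde p n) := by
  have hδ : 0 < (Filter.liminf (uInf w p) atTop - R) / 2 := by linarith
  set δ := (Filter.liminf (uInf w p) atTop - R) / 2 with hδdef
  rw [cinfISetW, Set.mem_setOf_eq, ENNReal.tendsto_nhds_zero]
  intro η hη
  have hev1 : ∀ᶠ n in atTop, R + δ < uInf w p n :=
    eventually_lt_of_lt_liminf (by rw [hδdef]; linarith) (uInf_bddUnder_ge w p)
  have hpos : (0 : ℝ≥0∞) < η * ENNReal.ofReal (δ ^ 2) :=
    ENNReal.mul_pos (ne_of_gt hη) (ne_of_gt (ENNReal.ofReal_pos.mpr (by positivity)))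
  have hev2 := ENNReal.tendsto_nhds_zero.mp hvar _ hpos
  filter_upwards [hev1, hev2] with n hn1 hn2
  refine iSup_le fun s => ?_
  have hms : R + δ ≤ mAvg w p n s := le_trans hn1.le (uInf_le_mAvg w p n s)
  have hsub : ∀ z ∈ {z | densRate w (fun n => ptilde p n) n s z ≤ R},
      δ ≤ |densRate w (fun m => ptilde p m) n s z -
        expW w (fun m => ptilde p m) n s (densRate w (fun m => ptilde p m) n s)| := by
    intro z hz
    have h1 : densRate w (fun m => ptilde p m) n s z ≤ R := hz
    rw [exp_dens_tilde w p n s, abs_sub_comm]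
    have h4 : mAvg w p n s = (1 / (n : ℝ)) * ∑ k : Fin n, Isym w p n k s := rfl
    have h2 : δ ≤ (1 / (n : ℝ)) * (∑ k : Fin n, Isym w p n k s) -
        densRate w (fun m => ptilde p m) n s z := by
      rw [h4] at hms
      linarith
    exact le_trans h2 (le_abs_self _)
  have hcheb := cheb_mass w p n s hδ _ hsub
  calc probEventW w (fun n => ptilde p n) n s
        {z | densRate w (fun n => ptilde p n) n s z ≤ R}
      = ENNReal.ofReal (massR w (fun m => ptilde p m) n s
          {z | densRate w (fun n => ptilde p n) n s z ≤ R}) :=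
        probEventW_eq_ofReal w (fun m => ptilde p m) n s (fun x => ptilde_ne_top p n x) _
    _ ≤ ENNReal.ofReal (varTilde w p n s / δ ^ 2) := ENNReal.ofReal_le_ofReal hcheb
    _ = ENNReal.ofReal (varTilde w p n s) / ENNReal.ofReal (δ ^ 2) :=
        ENNReal.ofReal_div_of_pos (by positivity)
    _ ≤ (⨆ s' : S, ENNReal.ofReal (varTilde w p n s')) / ENNReal.ofReal (δ ^ 2) :=
        ENNReal.div_le_div_right
          (le_iSup (fun s' => ENNReal.ofReal (varTilde w p n s')) s) _
    _ ≤ η := by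
        rw [ENNReal.div_le_iff_le_mul
          (Or.inl (ne_of_gt (ENNReal.ofReal_pos.mpr (by positivity))))
          (Or.inl ENNReal.ofReal_ne_top)]
        exact hn2

/-- Any achievable rate for the independent input is at most the liminf of the
per-symbol averages. -/
lemma keyA
    (hvar : Tendsto (fun n => ⨆ s : S, ENNReal.ofReal (varTilde w p n s)) atTop (nhds 0))
    (R : ℝ) (hR : R ∈ cinfISetW w (fun n => ptilde p n)) :
    R ≤ Filter.liminf (uInf w p) atTop := by
  by_contra hRL
  push_neg at hRL
  have hδ : 0 < (R - Filter.liminf (uInf w p) atTop) / 2 := by linarith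
  set δ := (R - Filter.liminf (uInf w p) atTop) / 2 with hδdef
  have hfreq : ∃ᶠ n in atTop, uInf w p n < R - δ :=
    frequently_lt_of_liminf_lt (uInf_cobdd w p) (by rw [hδdef]; linarith)
  rw [cinfISetW, Set.mem_setOf_eq] at hR
  have hev1 := ENNReal.tendsto_nhds_zero.mp hR (ENNReal.ofReal (1/4))
    (ENNReal.ofReal_pos.mpr (by norm_num))
  have hev2 := ENNReal.tendsto_nhds_zero.mp hvar (ENNReal.ofReal (δ^2/2))
    (ENNReal.ofReal_pos.mpr (by positivity))
  obtain ⟨n, hun, h1, h2⟩ := (hfreq.and_eventually (hev1.and hev2)).exists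
  obtain ⟨s, hs⟩ := exists_lt_of_ciInf_lt hun
  have hvs : varTilde w p n s ≤ δ^2/2 := by
    have hle : ENNReal.ofReal (varTilde w p n s) ≤ ENNReal.ofReal (δ^2/2) :=
      le_trans (le_iSup (fun s' : S => ENNReal.ofReal (varTilde w p n s')) s) h2
    exact (ENNReal.ofReal_le_ofReal_iff (by positivity)).mp hle
  have hsub : ∀ z ∈ {z | densRate w (fun n => ptilde p n) n s z ≤ R}ᶜ,
      δ ≤ |densRate w (fun m => ptilde p m) n s z -
        expW w (fun m => ptilde p m) n s (densRate w (fun m => ptilde p m) n s)| := by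
    intro z hz
    have h3 : R < densRate w (fun m => ptilde p m) n s z := lt_of_not_ge hz
    rw [exp_dens_tilde w p n s]
    have h4 : mAvg w p n s = (1 / (n : ℝ)) * ∑ k : Fin n, Isym w p n k s := rfl
    rw [h4] at hs
    have h5 : δ ≤ densRate w (fun m => ptilde p m) n s z -
        (1 / (n : ℝ)) * ∑ k : Fin n, Isym w p n k s := by linarith
    exact le_trans h5 (le_abs_self _)
  have hcheb := cheb_mass w p n s hδ _ hsub
  have hhalf : massR w (fun m => ptilde p m) n s
      {z | densRate w (fun n => ptilde p n) n s z ≤ R}ᶜ ≤ 1/2 := by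
    calc massR w (fun m => ptilde p m) n s
          {z | densRate w (fun n => ptilde p n) n s z ≤ R}ᶜ
        ≤ varTilde w p n s / δ^2 := hcheb
      _ ≤ (δ^2/2) / δ^2 := by gcongr
      _ = 1/2 := by
          field_simp
  have hcompl := massR_add_compl w (fun m => ptilde p m) n s
    {z | densRate w (fun n => ptilde p n) n s z ≤ R}
    (fun x => ptilde_ne_top p n x) (sum_ptilde p n)
  have hmassE : (1:ℝ)/2 ≤ massR w (fun m => ptilde p m) n s
      {z | densRate w (fun n => ptilde p n) n s z ≤ R} := by linarith
  have hchain : ENNReal.ofReal ((1:ℝ)/2) ≤ ENNReal.ofReal ((1:ℝ)/4) := by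
    calc ENNReal.ofReal ((1:ℝ)/2)
        ≤ ENNReal.ofReal (massR w (fun m => ptilde p m) n s
            {z | densRate w (fun n => ptilde p n) n s z ≤ R}) :=
          ENNReal.ofReal_le_ofReal hmassE
      _ = probEventW w (fun n => ptilde p n) n s
            {z | densRate w (fun n => ptilde p n) n s z ≤ R} :=
          (probEventW_eq_ofReal w (fun m => ptilde p m) n s
            (fun x => ptilde_ne_top p n x) _).symm
      _ ≤ ⨆ s' : S, probEventW w (fun n => ptilde p n) n s'
            {z | densRate w (fun n => ptilde p n) n s' z ≤ R} :=
          le_iSup (fun s' => probEventW w (fun n => ptilde p n) n s'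
            {z | densRate w (fun n => ptilde p n) n s' z ≤ R}) s
      _ ≤ ENNReal.ofReal (1/4) := h1
  have hfin := (ENNReal.ofReal_le_ofReal_iff (by norm_num)).mp hchain
  linarith

/-- Any achievable rate for the original input is at most the liminf of the
per-symbol averages. -/
lemma keyC (R : ℝ) (hR : R ∈ cinfISetW w (fun n x => p n x)) :
    R ≤ Filter.liminf (uInf w p) atTop := by
  have hmain : ∀ ε : ℝ, 0 < ε → R - ε ≤ Filter.liminf (uInf w p) atTop := by
    intro ε hε
    rw [cinfISetW, Set.mem_setOf_eq] at hR
    have hc : (0:ℝ) < ε / (2 * (|R| + 1)) := by positivity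
    have hev1 := ENNReal.tendsto_nhds_zero.mp hR (ENNReal.ofReal (ε / (2 * (|R| + 1))))
      (ENNReal.ofReal_pos.mpr hc)
    have hev2 : ∀ᶠ n : ℕ in atTop, 1 / (n:ℝ) ≤ ε / 2 := by
      filter_upwards [eventually_ge_atTop (max 1 ⌈2/ε⌉₊)] with n hn
      have hn1 : 1 ≤ n := le_trans (le_max_left _ _) hn
      have hn2 : (⌈2/ε⌉₊ : ℝ) ≤ n := by exact_mod_cast le_trans (le_max_right _ _) hn
      have hn3 : 2/ε ≤ (n:ℝ) := le_trans (Nat.le_ceil _) hn2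
      have hnpos : (0:ℝ) < n := by exact_mod_cast hn1
      rw [div_le_div_iff₀ hnpos (by norm_num : (0:ℝ) < 2)]
      calc (1:ℝ) * 2 = ε * (2/ε) := by field_simp
        _ ≤ ε * n := mul_le_mul_of_nonneg_left hn3 hε.le
    have hev : ∀ᶠ n : ℕ in atTop, R - ε ≤ uInf w p n := by
      filter_upwards [hev1, hev2] with n hn1 hn2
      show R - ε ≤ ⨅ s : S, mAvg w p n s
      refine le_ciInf fun s => ?_
      -- mass bound for the bad event
      have hmass0 : 0 ≤ massR w (fun n x => p n x) n s
          {z | densRate w (fun n x => p n x) n s z ≤ R} := massR_nonneg w _ n s _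
      have hmassA : massR w (fun n x => p n x) n s
          {z | densRate w (fun n x => p n x) n s z ≤ R} ≤ ε / (2 * (|R| + 1)) := by
        have h3 : probEventW w (fun n x => p n x) n s
            {z | densRate w (fun n x => p n x) n s z ≤ R}
            ≤ ENNReal.ofReal (ε / (2 * (|R| + 1))) :=
          le_trans (le_iSup (fun s' => probEventW w (fun n x => p n x) n s'
            {z | densRate w (fun n x => p n x) n s' z ≤ R}) s) hn1
        rw [probEventW_eq_ofReal w (fun n x => p n x) n s (fun x => pmf_ne_top _ x)] at h3
        exact (ENNReal.ofReal_le_ofReal_iff hc.le).mp h3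
      -- expectation decomposition
      set A : Set ((Fin n → 𝒳) × (Fin n → 𝒴)) :=
        {z | densRate w (fun n x => p n x) n s z ≤ R} with hA
      have hdecomp : expW w (fun n x => p n x) n s (densRate w (fun n x => p n x) n s)
          = (∑ z : (Fin n → 𝒳) × (Fin n → 𝒴), A.indicator (fun z' =>
              (p n z'.1 * Wblock w n s z'.1 z'.2).toReal *
                densRate w (fun n x => p n x) n s z') z)
          + (∑ z : (Fin n → 𝒳) × (Fin n → 𝒴), Aᶜ.indicator (fun z' =>
              (p n z'.1 * Wblock w n s z'.1 z'.2).toReal *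
                densRate w (fun n x => p n x) n s z') z) := by
        rw [expW, ← Finset.sum_add_distrib]
        refine Finset.sum_congr rfl fun z _ => ?_
        exact (congrFun (Set.indicator_self_add_compl A (fun z' =>
          (p n z'.1 * Wblock w n s z'.1 z'.2).toReal *
            densRate w (fun n x => p n x) n s z')) z).symm
      have ht := tail_bound w p n s A
      -- bound on the complement part
      have hcomplb : R * massR w (fun n x => p n x) n s Aᶜ
          ≤ ∑ z : (Fin n → 𝒳) × (Fin n → 𝒴), Aᶜ.indicator (fun z' =>
              (p n z'.1 * Wblock w n s z'.1 z'.2).toReal *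
                densRate w (fun n x => p n x) n s z') z := by
        rw [massR, Finset.mul_sum]
        refine Finset.sum_le_sum fun z _ => ?_
        by_cases hz : z ∈ Aᶜ
        · rw [Set.indicator_of_mem hz, Set.indicator_of_mem hz]
          have hdz : R < densRate w (fun n x => p n x) n s z := lt_of_not_ge hz
          have := mul_le_mul_of_nonneg_left hdz.le
            (ENNReal.toReal_nonneg : (0:ℝ) ≤ (p n z.1 * Wblock w n s z.1 z.2).toReal)
          linarith [this]
        · rw [Set.indicator_of_notMem hz, Set.indicator_of_notMem hz, mul_zero]
      have hmasscompl := massR_add_compl w (fun n x => p n x) n s A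
        (fun x => pmf_ne_top _ x) (sum_pmf_eq_one _)
      -- put it together
      have hRA : R * massR w (fun n x => p n x) n s A ≤ ε / 2 := by
        have h6 : R * massR w (fun n x => p n x) n s A
            ≤ |R| * massR w (fun n x => p n x) n s A :=
          mul_le_mul_of_nonneg_right (le_abs_self R) hmass0
        have h7 : |R| * massR w (fun n x => p n x) n s A
            ≤ |R| * (ε / (2 * (|R| + 1))) :=
          mul_le_mul_of_nonneg_left hmassA (abs_nonneg R)
        have hne : |R| + 1 ≠ 0 := by positivity
        have h8 : |R| * (ε / (2 * (|R| + 1))) ≤ ε / 2 := by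
          calc |R| * (ε / (2 * (|R| + 1)))
              ≤ (|R| + 1) * (ε / (2 * (|R| + 1))) :=
                mul_le_mul_of_nonneg_right (by linarith) hc.le
            _ = ε / 2 := by
                field_simp
        linarith
      have hElow : R - ε ≤ expW w (fun n x => p n x) n s
          (densRate w (fun n x => p n x) n s) := by
        rw [hdecomp]
        have h9 : R * massR w (fun n x => p n x) n s Aᶜ
            = R - R * massR w (fun n x => p n x) n s A := by
          have : massR w (fun n x => p n x) n s Aᶜ
              = 1 - massR w (fun n x => p n x) n s A := by linarith
          rw [this]; ring
        have h10 := hcomplb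
        rw [h9] at h10
        linarith [ht, h10, hRA, hn2]
      exact le_trans hElow (exp_dens_p_le w p n s)
    exact le_liminf_of_le (uInf_cobdd w p) hev
  by_contra h
  push_neg at h
  have := hmain ((R - Filter.liminf (uInf w p) atTop)/2) (by linarith)
  linarith

end WithS

end Main


/-- optimality of independent inputs for compound memoryless channels: if
the variance of the information density rate under the independent-symbols input `p̃`
satisfies `sup_s σ²_{n,s} → 0`, then (assuming the compound quantities are finite)
`cinf I(X;Y) ≤ cinf I(X̃;Ỹ)` and
`cinf I(X̃;Ỹ) = liminf_n inf_s (1/n)·Σ_{k} I(X̃_k;Ỹ_k|s)`. -/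
theorem independent_inputs_optimal {S 𝒳 𝒴 : Type*} [Nonempty S]
    [Fintype 𝒳] [Nonempty 𝒳] [Fintype 𝒴] [Nonempty 𝒴]
    (w : ℕ → S → 𝒳 → PMF 𝒴) (p : ∀ n : ℕ, PMF (Fin n → 𝒳))
    (hvar : Tendsto (fun n => ⨆ s : S, ENNReal.ofReal (varTilde w p n s))
      atTop (nhds 0))
    (hfin₁ : (cinfISetW w (fun n x => p n x)).Nonempty)
    (hfin₂ : BddAbove (cinfISetW w (fun n x => p n x)))
    (hfin₃ : (cinfISetW w (fun n => ptilde p n)).Nonempty)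
    (hfin₄ : BddAbove (cinfISetW w (fun n => ptilde p n))) :
    cinfIW w (fun n x => p n x) ≤ cinfIW w (fun n => ptilde p n) ∧
    cinfIW w (fun n => ptilde p n) =
      Filter.liminf (fun n : ℕ => ⨅ s : S, (1 / (n : ℝ)) * ∑ k : Fin n, Isym w p n k s)
        atTop := by
  have hL : cinfIW w (fun n => ptilde p n) = Filter.liminf (uInf w p) atTop := by
    apply le_antisymm
    · exact csSup_le hfin₃ (fun R hR => keyA w p hvar R hR)
    · by_contra h
      push_neg at h
      have hmem := keyB w p hvar
        ((cinfIW w (fun n => ptilde p n) + Filter.liminf (uInf w p) atTop) / 2)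
        (by linarith)
      have h2 : (cinfIW w (fun n => ptilde p n) + Filter.liminf (uInf w p) atTop) / 2
          ≤ cinfIW w (fun n => ptilde p n) := le_csSup hfin₄ hmem
      linarith
  constructor
  · refine csSup_le hfin₁ fun R hR => ?_
    rw [hL]
    exact keyC w p R hR
  · have heq : (fun n : ℕ => ⨅ s : S, (1 / (n : ℝ)) * ∑ k : Fin n, Isym w p n k s)
        = uInf w p := rfl
    rw [heq]
    exact hL

end
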